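/- Suppose \mu > cf(\mu) = \kappa and for each cardinal \tau < \mu there exists a \tau^+-complete uniform ultrafilter on \mu^+ (e.g., \mu is a limit of compact cardinals and \mu is strong limit). Then for every \beta < \mu and every coloring c : \mu^+ \times \mu \to 2 there exist A \subseteq \mu^+ with |A| = \mu^+ and B \subseteq \mu with |B| \geq |\beta| such that c is constant on A \times B. -/

import Mathlib

open Cardinal

/-- Polarized relation for a limit of compact cardinals: if `μ` is singular of
    cofinality `κ`, `μ` is a strong limit, and for every `τ < μ` there is a
    `τ⁺`-complete uniform ultrafilter on `μ⁺`, then for every `β < μ` and every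
    2-coloring of `μ⁺ × μ` there is a monochromatic rectangle `A × B` with
    `|A| = μ⁺` and `|B| ≥ β`. -/
theorem stmt_8 (μ κ : Cardinal) (hκ : κ = μ.ord.cof) (hsing : κ < μ)
    (hsl : μ.IsStrongLimit)
    (X Y : Type) (hX : #X = Order.succ μ) (hY : #Y = μ)
    (hult : ∀ τ : Cardinal, τ < μ → ∃ U : Ultrafilter X,
      (∀ s ∈ U, #s = #X) ∧
      (∀ (J : Type) (f : J → Set X), #J ≤ τ → (∀ j, f j ∈ U) → (⋂ j, f j) ∈ U)) :
    ∀ β : Cardinal, β < μ → ∀ c : X → Y → Fin 2,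
      ∃ (A : Set X) (B : Set Y), #A = Order.succ μ ∧ β ≤ #B ∧
        ∃ i : Fin 2, ∀ a ∈ A, ∀ b ∈ B, c a b = i := by
  intro β hβ c
  -- ℵ₀ < μ since μ is a strong limit and singular
  have hℵ : ℵ₀ < μ := by
    rcases lt_or_ge ℵ₀ μ with h | h
    · exact h
    · exfalso
      have h1 : ℵ₀ ≤ μ := hsl.aleph0_le
      have hμ : μ = ℵ₀ := le_antisymm h h1
      rw [hκ, hμ, Cardinal.isRegular_aleph0.cof_eq] at hsing
      exact lt_irrefl _ hsing
  set β' : Cardinal := max β ℵ₀ with hβ'def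
  have hβ'μ : β' < μ := max_lt hβ hℵ
  have hβ'inf : ℵ₀ ≤ β' := le_max_right _ _
  have hτ : (2 : Cardinal) ^ β' < μ := hsl.two_power_lt hβ'μ
  obtain ⟨U, hUuni, hUcomp⟩ := hult _ hτ
  -- pick Y₀ ⊆ Y of size β'
  have hβ'Y : β' ≤ #Y := by rw [hY]; exact hβ'μ.le
  obtain ⟨Y₀, hY₀⟩ := Cardinal.le_mk_iff_exists_set.mp hβ'Y
  set g : X → (↥Y₀ → Fin 2) := fun a y => c a ↑y with hg
  have hJ : #(↥Y₀ → Fin 2) ≤ (2 : Cardinal) ^ β' := by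
    rw [Cardinal.mk_arrow, Cardinal.lift_id, Cardinal.lift_id, hY₀, Cardinal.mk_fin]
    norm_num
  -- some fiber of g is in U
  have hfib : ∃ j : ↥Y₀ → Fin 2, g ⁻¹' {j} ∈ U := by
    by_contra hno
    push_neg at hno
    have hcomp : ∀ j, (g ⁻¹' {j})ᶜ ∈ U :=
      fun j => (Ultrafilter.compl_mem_iff_notMem).mpr (hno j)
    have hmem := hUcomp _ (fun j => (g ⁻¹' {j})ᶜ) hJ hcomp
    have hempty : (⋂ j, (g ⁻¹' {j})ᶜ) = (∅ : Set X) := by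
      ext a
      simp only [Set.mem_iInter, Set.mem_compl_iff, Set.mem_preimage,
        Set.mem_singleton_iff, Set.mem_empty_iff_false, iff_false, not_forall, not_not]
      exact ⟨g a, rfl⟩
    rw [hempty] at hmem
    exact Filter.empty_notMem (U : Filter X) hmem
  obtain ⟨j₀, hj₀⟩ := hfib
  set A : Set X := g ⁻¹' {j₀} with hAdef
  have hA : #A = Order.succ μ := by rw [← hX]; exact hUuni _ hj₀
  -- one color class of j₀ inside Y₀ has size ≥ β'
  set S : Fin 2 → Set ↥Y₀ := fun i => {y | j₀ y = i} with hSdef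
  have hSi : ∃ i : Fin 2, β' ≤ #(S i) := by
    by_contra hno
    push_neg at hno
    have hcover : (S 0 ∪ S 1) = Set.univ := by
      ext y
      simp only [Set.mem_union, Set.mem_setOf_eq, Set.mem_univ, iff_true, hSdef]
      omega
    have hle : #(↥Y₀) ≤ #(S 0) + #(S 1) := by
      calc #(↥Y₀) = #(↥(Set.univ : Set ↥Y₀)) := Cardinal.mk_univ.symm
        _ = #(↥(S 0 ∪ S 1)) := by rw [hcover]
        _ ≤ #(S 0) + #(S 1) := Cardinal.mk_union_le _ _
    rw [hY₀] at hle
    exact absurd hle (not_le.mpr (Cardinal.add_lt_of_lt hβ'inf (hno 0) (hno 1)))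
  obtain ⟨i, hi⟩ := hSi
  refine ⟨A, Subtype.val '' (S i), hA, ?_, i, ?_⟩
  · have : #(↥(Subtype.val '' (S i))) = #(S i) :=
      Cardinal.mk_image_eq Subtype.val_injective
    rw [this]
    exact le_trans (le_max_left _ _) hi
  · rintro a ha b hb
    obtain ⟨y, hyS, rfl⟩ := hb
    have hga : g a = j₀ := ha
    have : c a ↑y = g a y := rfl
    rw [this, hga]
    exact hyS
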